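/- arXiv:1905.06298 — 4 statements merged into one kernel-verified Lean document; each statement's English description precedes it below -/
import Mathlib

section
/- Let u : ℝ² → ℝ be differentiable at a point w, and suppose u agrees with an affine function l(x) = a·x + b on an open set U with w ∈ closure U, such that for some x ∈ U every open line segment (w, w+he) with h ≠ 0 sufficiently small and e not perpendicular to x - w is contained in U. Then Du(w) = a. -/
open Metric Set
open scoped RealInnerProductSpace

theorem affine_on_open_set_gradient
    (u : EuclideanSpace ℝ (Fin 2) → ℝ) (w : EuclideanSpace ℝ (Fin 2))
    (a : EuclideanSpace ℝ (Fin 2)) (b : ℝ)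
    (U : Set (EuclideanSpace ℝ (Fin 2)))
    (hU : IsOpen U)
    (hdiff : DifferentiableAt ℝ u w)
    (haff : ∀ y ∈ U, u y = ⟪a, y⟫ + b)
    (hw : w ∈ closure U)
    (x : EuclideanSpace ℝ (Fin 2)) (hx : x ∈ U)
    (hseg : ∀ e : EuclideanSpace ℝ (Fin 2), ‖e‖ = 1 → ⟪e, x - w⟫ ≠ 0 →
      ∃ h : ℝ, h ≠ 0 ∧ openSegment ℝ w (w + h • e) ⊆ U) :
    gradient u w = a := by
  classical
  set f := fderiv ℝ u w with hfdef
  have hfd : HasFDerivAt u f w := hdiff.hasFDerivAt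
  -- value at w
  have huw : u w = ⟪a, w⟫ + b := by
    have hne : (nhdsWithin w U).NeBot := mem_closure_iff_nhdsWithin_neBot.mp hw
    have h1 : Filter.Tendsto u (nhdsWithin w U) (nhds (u w)) :=
      hdiff.continuousAt.continuousWithinAt
    have h2 : Filter.Tendsto (fun y => ⟪a, y⟫ + b) (nhdsWithin w U)
        (nhds (⟪a, w⟫ + b)) := by
      exact (((innerSL ℝ a).continuous.add continuous_const).tendsto w).mono_left
        nhdsWithin_le_nhds
    have h3 : Filter.Tendsto u (nhdsWithin w U) (nhds (⟪a, w⟫ + b)) := by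
      refine h2.congr' ?_
      filter_upwards [self_mem_nhdsWithin] with y hy
      exact (haff y hy).symm
    exact tendsto_nhds_unique h1 h3
  -- directional derivative along admissible unit directions
  have key : ∀ e : EuclideanSpace ℝ (Fin 2), ‖e‖ = 1 → ⟪e, x - w⟫ ≠ 0 →
      f e = ⟪a, e⟫ := by
    intro e he hex
    obtain ⟨h, hh0, hsub⟩ := hseg e he hex
    set s : Set ℝ := Ioo (min h 0) (max h 0) with hsdef
    have hminmax : min h 0 < max h 0 := by
      rcases hh0.lt_or_gt with hneg | hpos
      · simpa [min_eq_left hneg.le, max_eq_right hneg.le] using hneg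
      · simpa [min_eq_right hpos.le, max_eq_left hpos.le] using hpos
    have hmem : ∀ t ∈ s, w + t • e ∈ U := by
      intro t ht
      apply hsub
      rw [openSegment_eq_image']
      refine ⟨t / h, ?_, ?_⟩
      · rcases hh0.lt_or_gt with hneg | hpos
        · rw [hsdef, min_eq_left hneg.le, max_eq_right hneg.le] at ht
          constructor
          · exact div_pos_of_neg_of_neg ht.2 hneg
          · rw [div_lt_one_of_neg hneg]
            exact ht.1
        · rw [hsdef, min_eq_right hpos.le, max_eq_left hpos.le] at ht
          exact ⟨div_pos ht.1 hpos, (div_lt_one hpos).mpr ht.2⟩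
      · have : (t / h) • (h • e) = t • e := by
          rw [smul_smul, div_mul_cancel₀ _ hh0]
        simp [this]
    -- derivative of t ↦ u (w + t • e) at 0
    have hcurve : HasDerivAt (fun t : ℝ => w + t • e) e 0 := by
      simpa using ((hasDerivAt_id (0 : ℝ)).smul_const e).const_add w
    have hφ : HasDerivAt (fun t : ℝ => u (w + t • e)) (f e) 0 := by
      have h2 : HasFDerivAt u f (w + (0 : ℝ) • e) := by simpa using hfd
      exact h2.comp_hasDerivAt 0 hcurve
    have hφ' : HasDerivWithinAt (fun t : ℝ => u (w + t • e)) (f e) s 0 :=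
      hφ.hasDerivWithinAt
    have hψ : HasDerivWithinAt (fun t : ℝ => u w + t * ⟪a, e⟫) ⟪a, e⟫ s 0 := by
      simpa using (((hasDerivAt_id (0 : ℝ)).mul_const ⟪a, e⟫).const_add
        (u w)).hasDerivWithinAt (s := s)
    have heq : ∀ t ∈ s, u (w + t • e) = u w + t * ⟪a, e⟫ := by
      intro t ht
      rw [haff _ (hmem t ht), inner_add_right, real_inner_smul_right, huw]
      ring
    have hφ'' : HasDerivWithinAt (fun t : ℝ => u (w + t • e)) ⟪a, e⟫ s 0 := by
      refine hψ.congr heq ?_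
      simp [huw]
    have hud : UniqueDiffWithinAt ℝ s 0 := by
      refine uniqueDiffWithinAt_convex (convex_Ioo _ _) ?_ ?_
      · rw [interior_Ioo]
        exact nonempty_Ioo.mpr hminmax
      · rw [closure_Ioo hminmax.ne]
        exact ⟨min_le_right _ _, le_max_right _ _⟩
    have := hφ'.derivWithin hud
    rw [hφ''.derivWithin hud] at this
    exact this.symm
  -- extend to all vectors
  have hall : ∀ v : EuclideanSpace ℝ (Fin 2), f v = ⟪a, v⟫ := by
    by_cases hxw : x = w
    · -- w ∈ U, so u is affine near w
      subst hxw
      have hmemU : U ∈ nhds x := hU.mem_nhds hx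
      have hfd' : HasFDerivAt u (innerSL ℝ a) x := by
        have haf : HasFDerivAt (fun y => ⟪a, y⟫ + b) (innerSL ℝ a) x := by
          simpa using ((innerSL ℝ a).hasFDerivAt (x := x)).add_const b
        refine haf.congr_of_eventuallyEq ?_
        filter_upwards [hmemU] with y hy
        exact haff y hy
      have : f = innerSL ℝ a := hfd.unique hfd'
      intro v; rw [this]; rfl
    · have hd : x - w ≠ 0 := sub_ne_zero.mpr hxw
      have step1 : ∀ v : EuclideanSpace ℝ (Fin 2), ⟪v, x - w⟫ ≠ 0 →
          f v = ⟪a, v⟫ := by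
        intro v hv
        have hv0 : v ≠ 0 := by
          rintro rfl; simp at hv
        have hnv : ‖v‖ ≠ 0 := norm_ne_zero_iff.mpr hv0
        have he1 : ‖(‖v‖⁻¹ • v)‖ = 1 := by
          rw [norm_smul, norm_inv, norm_norm, inv_mul_cancel₀ hnv]
        have he2 : ⟪(‖v‖⁻¹ • v), x - w⟫ ≠ 0 := by
          rw [real_inner_smul_left]
          exact mul_ne_zero (inv_ne_zero hnv) hv
        have := key _ he1 he2
        rw [map_smul, real_inner_smul_right, smul_eq_mul] at this
        have h2 := mul_left_cancel₀ (inv_ne_zero hnv) this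
        exact h2
      intro v
      by_cases hv : ⟪v, x - w⟫ ≠ 0
      · exact step1 v hv
      · push_neg at hv
        have hdd : ⟪(x - w), x - w⟫ ≠ 0 := by
          exact inner_self_ne_zero.mpr hd
        have h1 : ⟪v + (x - w), x - w⟫ ≠ 0 := by
          rw [inner_add_left, hv, zero_add]
          exact hdd
        have e1 := step1 _ h1
        have e2 := step1 _ hdd
        rw [map_add, inner_add_right, ← e2] at e1
        exact add_right_cancel e1
  have hfd' : HasFDerivAt u ((InnerProductSpace.toDual ℝ _) a) w := by
    have : f = (InnerProductSpace.toDual ℝ _) a := by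
      ext v
      rw [hall v]
      simp [InnerProductSpace.toDual_apply_apply]
    rw [← this]; exact hfd
  exact (hasGradientAt_iff_hasFDerivAt.mpr hfd').gradient
end

section
/- Let u : B(0,4) → ℝ satisfy sup_{x ∈ B(0,4)} |u(x) - x₂| ≤ λ for some λ ∈ (0,1), and let z̄ ∈ B(0,4) with u differentiable at z̄. Then the set {y ∈ B(0,4) : (e₂ - Du(z̄))·(y - z̄) < -2λ} is contained in the complement (within B(0,4)) of W := {y ∈ B(0,4) : u(y) > u(z̄) + Du(z̄)·(y - z̄)}, and {y ∈ B(0,4) : (e₂ - Du(z̄))·(y - z̄) > 2λ} ⊆ W. -/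
open Metric Set
open scoped RealInnerProductSpace

theorem flat_halfplane_inclusions
    (u : EuclideanSpace ℝ (Fin 2) → ℝ) (lam : ℝ) (hlam : lam ∈ Set.Ioo (0:ℝ) 1)
    (hflat : ∀ x ∈ ball (0 : EuclideanSpace ℝ (Fin 2)) 4, |u x - x 1| ≤ lam)
    (z : EuclideanSpace ℝ (Fin 2)) (hz : z ∈ ball (0 : EuclideanSpace ℝ (Fin 2)) 4)
    (hdiff : DifferentiableAt ℝ u z)
    (e₂ : EuclideanSpace ℝ (Fin 2)) (he₂ : e₂ = EuclideanSpace.single 1 (1:ℝ))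
    (W : Set (EuclideanSpace ℝ (Fin 2)))
    (hW : W = {y ∈ ball (0 : EuclideanSpace ℝ (Fin 2)) 4 |
      u y > u z + ⟪gradient u z, y - z⟫}) :
    {y ∈ ball (0 : EuclideanSpace ℝ (Fin 2)) 4 | ⟪e₂ - gradient u z, y - z⟫ < -2 * lam}
      ⊆ ball (0 : EuclideanSpace ℝ (Fin 2)) 4 \ W ∧
    {y ∈ ball (0 : EuclideanSpace ℝ (Fin 2)) 4 | ⟪e₂ - gradient u z, y - z⟫ > 2 * lam}
      ⊆ W := by
  have key : ∀ y : EuclideanSpace ℝ (Fin 2),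
      u y - (u z + ⟪gradient u z, y - z⟫)
        = (u y - y 1) - (u z - z 1) + ⟪e₂ - gradient u z, y - z⟫ := by
    intro y
    have h2 : ⟪e₂, y - z⟫ = y 1 - z 1 := by
      rw [he₂, EuclideanSpace.inner_single_left]
      simp
    rw [inner_sub_left, h2]
    ring
  have hzb := hflat z hz
  rw [abs_le] at hzb
  constructor
  · rintro y ⟨hy, hlt⟩
    refine ⟨hy, ?_⟩
    rw [hW]
    rintro ⟨-, hgt⟩
    have hyb := hflat y hy
    rw [abs_le] at hyb
    have := key y
    linarith
  · rintro y ⟨hy, hgt⟩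
    rw [hW]
    refine ⟨hy, ?_⟩
    have hyb := hflat y hy
    rw [abs_le] at hyb
    have := key y
    linarith
end

section
/- Let V ⊆ ℝ² be a bounded open set with boundary the simple closed curve γ = γ₀ ∪ [x̄, ȳ], and suppose u, differentiable at z̄ ∈ (x̄, ȳ), satisfies the comparison principle on V with affine functions (if u ≥ l on ∂V for affine l then u ≥ l on V). If there exist ε₀ > 0 and a unit vector ν perpendicular to ȳ - x̄ with z̄ + tν ∈ V for small t > 0, and u(y) ≥ u(z̄) + (Du(z̄) + ε₀ν)·(y - z̄) for all y ∈ ∂V, then we reach a contradiction: the one-sided derivative of u at z̄ in direction ν is simultaneously Du(z̄)·ν and ≥ Du(z̄)·ν + ε₀. -/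
open Metric Set
open scoped RealInnerProductSpace

theorem no_interior_touching_configuration
    (u : EuclideanSpace ℝ (Fin 2) → ℝ)
    (V : Set (EuclideanSpace ℝ (Fin 2)))
    (hVopen : IsOpen V) (hVbd : Bornology.IsBounded V)
    (hcont : ContinuousOn u (closure V))
    (xbar ybar zbar : EuclideanSpace ℝ (Fin 2))
    (hzseg : zbar ∈ openSegment ℝ xbar ybar)
    (hdiff : DifferentiableAt ℝ u zbar)
    (hcomp : ∀ (a : EuclideanSpace ℝ (Fin 2)) (b : ℝ),
      (∀ y ∈ frontier V, u y ≥ ⟪a, y⟫ + b) → ∀ y ∈ V, u y ≥ ⟪a, y⟫ + b)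
    (ν : EuclideanSpace ℝ (Fin 2)) (hν : ‖ν‖ = 1) (hperp : ⟪ν, ybar - xbar⟫ = 0)
    (ε₀ : ℝ) (hε₀ : 0 < ε₀)
    (δ : ℝ) (hδ : 0 < δ)
    (hin : ∀ t : ℝ, 0 < t → t < δ → zbar + t • ν ∈ V)
    (hbd : ∀ y ∈ frontier V, u y ≥ u zbar + ⟪gradient u zbar + ε₀ • ν, y - zbar⟫) :
    False := by
  set a := gradient u zbar + ε₀ • ν with ha
  set d : ℝ := ⟪gradient u zbar, ν⟫ with hd
  -- inner of a with ν
  have hav : ⟪a, ν⟫ = d + ε₀ := by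
    rw [ha, inner_add_left, real_inner_smul_left, real_inner_self_eq_norm_sq, hν]
    ring
  -- comparison gives interior inequality
  have hI : ∀ y ∈ V, u y ≥ ⟪a, y⟫ + (u zbar - ⟪a, zbar⟫) := by
    refine hcomp a _ (fun y hy => ?_)
    have := hbd y hy
    rw [inner_sub_right] at this
    linarith
  -- the one-dimensional function
  set g : ℝ → ℝ := fun t => u (zbar + t • ν) with hg
  have hline : HasDerivAt (fun t : ℝ => zbar + t • ν) ν 0 := by
    simpa using ((hasDerivAt_id (0:ℝ)).smul_const ν).const_add zbar
  have hgd : HasDerivAt g d 0 := by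
    have h0 : (fun t : ℝ => zbar + t • ν) 0 = zbar := by simp
    have := (h0 ▸ hdiff.hasFDerivAt).comp_hasDerivAt 0 hline
    have hgrad : (fderiv ℝ u zbar) ν = d := by
      rw [hd, gradient]
      exact (InnerProductSpace.toDual_symm_apply (𝕜 := ℝ)).symm
    rw [h0, hgrad] at this
    exact this
  -- slope bound for small positive t
  have hslope : ∀ᶠ t in nhdsWithin (0:ℝ) (Set.Ioi 0), d + ε₀ ≤ slope g 0 t := by
    filter_upwards [Ioo_mem_nhdsGT_of_mem (Set.left_mem_Ico.2 hδ)] with t ht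
    have hmem := hin t ht.1 ht.2
    have h1 := hI _ hmem
    have h2 : ⟪a, zbar + t • ν⟫ = ⟪a, zbar⟫ + t * ⟪a, ν⟫ := by
      rw [inner_add_right, real_inner_smul_right]
    have hgt : g t ≥ u zbar + t * (d + ε₀) := by
      rw [hg]; simp only []
      rw [h2, hav] at h1
      linarith
    have hg0 : g 0 = u zbar := by simp [hg]
    rw [slope_def_field, hg0, sub_zero, le_div_iff₀ ht.1]
    nlinarith [hgt]
  -- derivative is the limit of slopes along 𝓝[>]0
  have htend : Filter.Tendsto (slope g 0) (nhdsWithin (0:ℝ) (Set.Ioi 0)) (nhds d) := by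
    have := hasDerivAt_iff_tendsto_slope.mp hgd
    exact this.mono_left (nhdsWithin_mono _ (fun t ht => ne_of_gt ht))
  have : d + ε₀ ≤ d := ge_of_tendsto htend hslope
  linarith
end

section
/- Let W ⊆ B(0,4) ⊆ ℝ² be the open set {y ∈ B(0,4) : u(y) > u(z̄) + Du(z̄)·(y−z̄)} for a function u continuous on B̄(0,4) satisfying the comparison principle with affine functions (if u ≤ l on the boundary of a bounded open set V with V̄ ⊆ B̄(0,4) for affine l, then u ≤ l in V, and same with ≥). If W₀ is a connected component of W whose closure is contained in B(0,4), then u(y) = u(z̄) + Du(z̄)·(y−z̄) on W₀, contradicting the definition of W; hence every connected component of W has closure meeting ∂B(0,4). -/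
open Metric Set
open scoped RealInnerProductSpace

theorem component_reaches_boundary
    (u : EuclideanSpace ℝ (Fin 2) → ℝ)
    (hcont : ContinuousOn u (closedBall (0 : EuclideanSpace ℝ (Fin 2)) 4))
    (zbar : EuclideanSpace ℝ (Fin 2)) (hzbar : zbar ∈ ball (0 : EuclideanSpace ℝ (Fin 2)) 4)
    (hdiff : DifferentiableAt ℝ u zbar)
    (hcompLe : ∀ V : Set (EuclideanSpace ℝ (Fin 2)), IsOpen V → Bornology.IsBounded V →
      closure V ⊆ closedBall (0 : EuclideanSpace ℝ (Fin 2)) 4 →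
      ∀ (a : EuclideanSpace ℝ (Fin 2)) (b : ℝ),
        (∀ y ∈ frontier V, u y ≤ ⟪a, y⟫ + b) → ∀ y ∈ V, u y ≤ ⟪a, y⟫ + b)
    (hcompGe : ∀ V : Set (EuclideanSpace ℝ (Fin 2)), IsOpen V → Bornology.IsBounded V →
      closure V ⊆ closedBall (0 : EuclideanSpace ℝ (Fin 2)) 4 →
      ∀ (a : EuclideanSpace ℝ (Fin 2)) (b : ℝ),
        (∀ y ∈ frontier V, u y ≥ ⟪a, y⟫ + b) → ∀ y ∈ V, u y ≥ ⟪a, y⟫ + b)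
    (W : Set (EuclideanSpace ℝ (Fin 2)))
    (hW : W = {y ∈ ball (0 : EuclideanSpace ℝ (Fin 2)) 4 |
      u y > u zbar + ⟪gradient u zbar, y - zbar⟫}) :
    ∀ x ∈ W, (closure (connectedComponentIn W x) ∩
      sphere (0 : EuclideanSpace ℝ (Fin 2)) 4).Nonempty := by
  intro x hx
  by_contra hempty
  rw [Set.not_nonempty_iff_eq_empty] at hempty
  set g := gradient u zbar with hg
  set l : EuclideanSpace ℝ (Fin 2) → ℝ := fun y => u zbar + ⟪g, y - zbar⟫ with hl
  -- W is open
  have hWsub : W ⊆ ball (0 : EuclideanSpace ℝ (Fin 2)) 4 := by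
    rw [hW]; exact fun y hy => hy.1
  have hWopen : IsOpen W := by
    have h1 : W = ball (0 : EuclideanSpace ℝ (Fin 2)) 4 ∩
        (fun y => u y - l y) ⁻¹' Ioi 0 := by
      rw [hW]; ext y
      simp only [mem_setOf_eq, mem_inter_iff, mem_preimage, mem_Ioi, hl]
      constructor
      · rintro ⟨h1, h2⟩; exact ⟨h1, by linarith⟩
      · rintro ⟨h1, h2⟩; exact ⟨h1, by linarith⟩
    rw [h1]
    apply ContinuousOn.isOpen_inter_preimage _ isOpen_ball isOpen_Ioi
    apply ContinuousOn.sub (hcont.mono ball_subset_closedBall)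
    have hlcont : Continuous l :=
      continuous_const.add (Continuous.inner continuous_const
        (continuous_id.sub continuous_const))
    exact hlcont.continuousOn
  set V := connectedComponentIn W x with hV
  have hxV : x ∈ V := mem_connectedComponentIn hx
  have hVsubW : V ⊆ W := connectedComponentIn_subset W x
  have hVopen : IsOpen V := hWopen.connectedComponentIn
  have hclV : closure V ⊆ closedBall (0 : EuclideanSpace ℝ (Fin 2)) 4 := by
    calc closure V ⊆ closure (ball (0 : EuclideanSpace ℝ (Fin 2)) 4) :=
          closure_mono (hVsubW.trans hWsub)
      _ = closedBall 0 4 := closure_ball 0 (by norm_num)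
  have hclV' : closure V ⊆ ball (0 : EuclideanSpace ℝ (Fin 2)) 4 := by
    intro y hy
    have h1 := hclV hy
    have h2 : y ∉ sphere (0 : EuclideanSpace ℝ (Fin 2)) 4 := by
      intro hs
      have : y ∈ closure V ∩ sphere (0 : EuclideanSpace ℝ (Fin 2)) 4 := ⟨hy, hs⟩
      rw [hempty] at this; exact this
    rw [mem_closedBall] at h1
    rw [mem_sphere] at h2
    rw [mem_ball]
    exact lt_of_le_of_ne h1 h2
  have hVbdd : Bornology.IsBounded V :=
    (isBounded_ball).subset (hVsubW.trans hWsub)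
  -- frontier points are not in W
  have hfront : ∀ y ∈ frontier V, y ∉ W := by
    intro y hy hyW
    have hycl : y ∈ closure V := hy.1
    have hynV : y ∉ V := fun h => hy.2 (by rwa [hVopen.interior_eq])
    -- V ∪ {y} is preconnected and contained in W, hence y ∈ V
    have hconn : IsPreconnected (V ∪ {y}) := by
      have hVconn : IsPreconnected V := (isPreconnected_connectedComponentIn)
      have : V ⊆ V ∪ {y} := subset_union_left
      have h2 : V ∪ {y} ⊆ closure V := by
        rintro z (hz | hz)
        · exact subset_closure hz
        · rw [mem_singleton_iff] at hz; subst hz; exact hycl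
      exact hVconn.subset_closure this h2
    have hsub : V ∪ {y} ⊆ W := by
      rintro z (hz | hz)
      · exact hVsubW hz
      · rw [mem_singleton_iff] at hz; subst hz; exact hyW
    have : V ∪ {y} ⊆ V := by
      rw [hV]
      apply hconn.subset_connectedComponentIn (Or.inl hxV) hsub
    exact hynV (this (Or.inr rfl))
  -- apply comparison
  set b : ℝ := u zbar - ⟪g, zbar⟫ with hb
  have hkey : ∀ y ∈ frontier V, u y ≤ ⟪g, y⟫ + b := by
    intro y hy
    have hyW := hfront y hy
    have hyball : y ∈ ball (0 : EuclideanSpace ℝ (Fin 2)) 4 :=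
      hclV' hy.1
    have : ¬ (u y > u zbar + ⟪g, y - zbar⟫) := by
      intro h; exact hyW (by rw [hW]; exact ⟨hyball, h⟩)
    push_neg at this
    have hinner : ⟪g, y - zbar⟫ = ⟪g, y⟫ - ⟪g, zbar⟫ := inner_sub_right g y zbar
    rw [hb]; linarith [this, hinner.symm ▸ this]
  have := hcompLe V hVopen hVbdd hclV g b hkey x hxV
  have hxW : u x > u zbar + ⟪g, x - zbar⟫ := by
    rw [hW] at hx; exact hx.2
  have hinner : ⟪g, x - zbar⟫ = ⟪g, x⟫ - ⟪g, zbar⟫ := inner_sub_right g x zbar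
  rw [hb] at this
  linarith
end
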